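/- Let p, q ∈ ℝ² with x_p < x_q. Then for every y ∈ ℝ, δ'_{pq}(y) = max{ |y_p − y|, |y_q − y| } (equivalently, δ'_{pq}(y) = max{ δ_{pp}(y), δ_{qq}(y) }). -/
import Mathlib


open Metric Set

noncomputable section

/-- Points of the Euclidean plane ℝ². -/
abbrev Pt : Type := EuclideanSpace ℝ (Fin 2)

/-- The point (x, y) ∈ ℝ². -/
def pt (x y : ℝ) : Pt := (WithLp.equiv 2 (Fin 2 → ℝ)).symm ![x, y]

/-- The leftward horizontal halfline ←p = {(x, y_p) : x ≤ x_p}. -/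
def leftRay (p : Pt) : Set Pt := {z : Pt | z 1 = p 1 ∧ z 0 ≤ p 0}

/-- The rightward horizontal halfline →p = {(x, y_p) : x ≥ x_p}. -/
def rightRay (p : Pt) : Set Pt := {z : Pt | z 1 = p 1 ∧ p 0 ≤ z 0}

/-- h_{←p}(q): Euclidean distance from q to the leftward halfline at p. -/
def hL (p q : Pt) : ℝ := infDist q (leftRay p)

/-- h_{→p}(q): Euclidean distance from q to the rightward halfline at p. -/
def hR (p q : Pt) : ℝ := infDist q (rightRay p)

/-- h_{←S}(q) = max_{p ∈ S} h_{←p}(q). -/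
def hLS (S : Finset Pt) (hS : S.Nonempty) (q : Pt) : ℝ := S.sup' hS fun p => hL p q

/-- h_{→S}(q) = max_{p ∈ S} h_{→p}(q). -/
def hRS (S : Finset Pt) (hS : S.Nonempty) (q : Pt) : ℝ := S.sup' hS fun p => hR p q

/-- δ_{pq}(y) = inf_x max{‖(x,y) − p‖, ‖(x,y) − q‖}. -/
def delta (p q : Pt) (y : ℝ) : ℝ := ⨅ x : ℝ, max ‖pt x y - p‖ ‖pt x y - q‖

/-- δ'_{pq}(y) = inf_x max{h_{←q}((x,y)), h_{→p}((x,y))}. -/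
def delta' (p q : Pt) (y : ℝ) : ℝ := ⨅ x : ℝ, max (hL q (pt x y)) (hR p (pt x y))


lemma pt_apply0 (x y : ℝ) : pt x y 0 = x := rfl
lemma pt_apply1 (x y : ℝ) : pt x y 1 = y := rfl

lemma coord_le_dist (i : Fin 2) (z w : Pt) : |z i - w i| ≤ dist z w := by
  rw [EuclideanSpace.dist_eq]
  have h1 : |z i - w i| = Real.sqrt (dist (z i) (w i) ^ 2) := by
    rw [Real.sqrt_sq_eq_abs, Real.dist_eq, abs_abs]
  rw [h1]
  apply Real.sqrt_le_sqrt
  exact Finset.single_le_sum (f := fun j => dist (z j) (w j) ^ 2)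
    (fun j _ => sq_nonneg _) (Finset.mem_univ i)

lemma dist_pt (x y a b : ℝ) : dist (pt x y) (pt a b) = Real.sqrt ((x - a)^2 + (y - b)^2) := by
  rw [EuclideanSpace.dist_eq, Fin.sum_univ_two]
  simp [pt_apply0, pt_apply1, Real.dist_eq, sq_abs]

lemma hL_ge (q : Pt) (x y : ℝ) : |y - q 1| ≤ hL q (pt x y) := by
  rw [hL, Metric.infDist_eq_iInf]
  have : Nonempty ↑(leftRay q) := ⟨⟨q, rfl, le_rfl⟩⟩
  refine le_ciInf fun ⟨w, hw⟩ => ?_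
  have := coord_le_dist 1 (pt x y) w
  rwa [pt_apply1, hw.1] at this

lemma hR_ge (p : Pt) (x y : ℝ) : |y - p 1| ≤ hR p (pt x y) := by
  rw [hR, Metric.infDist_eq_iInf]
  have : Nonempty ↑(rightRay p) := ⟨⟨p, rfl, le_rfl⟩⟩
  refine le_ciInf fun ⟨w, hw⟩ => ?_
  have := coord_le_dist 1 (pt x y) w
  rwa [pt_apply1, hw.1] at this

lemma hL_eq (q : Pt) (x y : ℝ) (hx : x ≤ q 0) : hL q (pt x y) = |y - q 1| := by
  refine le_antisymm ?_ (hL_ge q x y)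
  have hmem : pt x (q 1) ∈ leftRay q := ⟨rfl, by rwa [pt_apply0]⟩
  calc hL q (pt x y) ≤ dist (pt x y) (pt x (q 1)) := infDist_le_dist_of_mem hmem
    _ = |y - q 1| := by rw [dist_pt]; simp [Real.sqrt_sq_eq_abs]

lemma hR_eq (p : Pt) (x y : ℝ) (hx : p 0 ≤ x) : hR p (pt x y) = |y - p 1| := by
  refine le_antisymm ?_ (hR_ge p x y)
  have hmem : pt x (p 1) ∈ rightRay p := ⟨rfl, by rwa [pt_apply0]⟩
  calc hR p (pt x y) ≤ dist (pt x y) (pt x (p 1)) := infDist_le_dist_of_mem hmem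
    _ = |y - p 1| := by rw [dist_pt]; simp [Real.sqrt_sq_eq_abs]

lemma delta_self (p : Pt) (y : ℝ) : delta p p y = |p 1 - y| := by
  rw [delta]
  have key : ∀ x : ℝ, max ‖pt x y - p‖ ‖pt x y - p‖ = dist (pt x y) p := by
    intro x; rw [max_self, ← dist_eq_norm]
  simp only [key]
  apply le_antisymm
  · refine ciInf_le_of_le ⟨0, fun r ⟨x, hx⟩ => hx ▸ dist_nonneg⟩ (p 0) ?_
    have : dist (pt (p 0) y) p = |y - p 1| := by
      rw [EuclideanSpace.dist_eq, Fin.sum_univ_two]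
      simp [pt_apply0, pt_apply1, Real.dist_eq, sq_abs, Real.sqrt_sq_eq_abs]
    rw [this, abs_sub_comm]
  · refine le_ciInf fun x => ?_
    rw [abs_sub_comm]
    have := coord_le_dist 1 (pt x y) p
    rwa [pt_apply1] at this

theorem stmt_7 (p q : Pt) (h : p 0 < q 0) (y : ℝ) :
    delta' p q y = max |p 1 - y| |q 1 - y| ∧
    delta' p q y = max (delta p p y) (delta q q y) := by
  have h1 : delta' p q y = max |p 1 - y| |q 1 - y| := by
    rw [delta']
    apply le_antisymm
    · refine ciInf_le_of_le ⟨0, fun r ⟨x, hx⟩ => hx ▸ le_max_of_le_left (by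
        exact le_trans (abs_nonneg _) (hL_ge q x y))⟩ (p 0) ?_
      rw [hL_eq q (p 0) y h.le, hR_eq p (p 0) y le_rfl, abs_sub_comm y (q 1),
        abs_sub_comm y (p 1), max_comm]
    · refine le_ciInf fun x => ?_
      refine max_le (le_trans ?_ (le_max_right _ _)) (le_trans ?_ (le_max_left _ _))
      · rw [abs_sub_comm]; exact hR_ge p x y
      · rw [abs_sub_comm]; exact hL_ge q x y
  exact ⟨h1, by rw [h1, delta_self, delta_self]⟩
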